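/- Consider the random assignment process: p₁ = 1; for i ≥ 2, p_i is uniform over {1,2,3} \ {p_{i−1}}; and each q_j is uniform over {1,2}, independently of everything else. Then for every pair (i,j) with |i − j| ≥ 2, the probability that p_i = p_j and q_i ≠ q_j is at least 1/8. -/
import Mathlib


/-- Given the current value `a ∈ {1,2,3}` (as `Fin 3`) and a uniform bit `b`, pick one of
the two values different from `a`: the candidates `a+1` and `a+2` (mod 3) are exactly the
two elements of `Fin 3 \ {a}`. -/
def nextP (a : Fin 3) (b : Fin 2) : Fin 3 := a + 1 + ⟨b.val, by omega⟩

/-- The random process for `p`: `p₁` is a fixed value, and `p_{i+1}` is chosen uniformly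
among the two values different from `p_i`, the choice being driven by the coin `c (i+1)`. -/
def pSeq (c : ℕ → Fin 2) : ℕ → Fin 3
  | 0 => 1
  | n + 1 => nextP (pSeq c n) (c (n + 1))

/-- Pick two coin values steering the chain from `a` to `t` in two steps. -/
def pick (a t : Fin 3) : Fin 2 × Fin 2 :=
  if t - (a + 2) = 0 then (0, 0) else if t - (a + 2) = 1 then (0, 1) else (1, 1)

lemma pick_spec : ∀ a t : Fin 3, nextP (nextP a (pick a t).1) (pick a t).2 = t := by decide

lemma pSeq_congr {c c' : ℕ → Fin 2} (n : ℕ)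
    (h : ∀ m, 1 ≤ m → m ≤ n → c m = c' m) : pSeq c n = pSeq c' n := by
  induction n with
  | zero => rfl
  | succ k ih =>
    simp only [pSeq]
    rw [ih (fun m h1 h2 => h m h1 (by omega)), h (k + 1) (by omega) le_rfl]

/-- The coin function read off from a configuration. -/
def cFun (ℓ : ℕ) (hℓ : 0 < ℓ) (x : Fin ℓ → Fin 2) : ℕ → Fin 2 :=
  fun n => x ⟨n % ℓ, Nat.mod_lt n hℓ⟩

/-- The "forcing" map: overwrite the coins at positions `j-1`, `j` so that `p_j = p_i`,
and overwrite `q_j` so that `q_j ≠ q_i`. -/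
def Phi (ℓ : ℕ) (hℓ : 0 < ℓ) (i j : Fin ℓ) (hij : (i : ℕ) + 2 ≤ (j : ℕ))
    (ω : (Fin ℓ → Fin 2) × (Fin ℓ → Fin 2)) : (Fin ℓ → Fin 2) × (Fin ℓ → Fin 2) :=
  (Function.update
      (Function.update ω.1 ⟨(j : ℕ) - 1, by have := j.isLt; omega⟩
        (pick (pSeq (cFun ℓ hℓ ω.1) ((j : ℕ) - 2)) (pSeq (cFun ℓ hℓ ω.1) (i : ℕ))).1)
      j
      (pick (pSeq (cFun ℓ hℓ ω.1) ((j : ℕ) - 2)) (pSeq (cFun ℓ hℓ ω.1) (i : ℕ))).2,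
    Function.update ω.2 j (ω.2 i + 1))

lemma aux_main (ℓ : ℕ) (hℓ : 0 < ℓ) (i j : Fin ℓ) (hij : (i : ℕ) + 2 ≤ (j : ℕ)) :
    Fintype.card ((Fin ℓ → Fin 2) × (Fin ℓ → Fin 2)) ≤
      8 * (Finset.univ.filter (fun ω : (Fin ℓ → Fin 2) × (Fin ℓ → Fin 2) =>
        pSeq (fun n => ω.1 ⟨n % ℓ, Nat.mod_lt n hℓ⟩) (i : ℕ) =
          pSeq (fun n => ω.1 ⟨n % ℓ, Nat.mod_lt n hℓ⟩) (j : ℕ) ∧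
        ω.2 i ≠ ω.2 j)).card := by
  have hjl := j.isLt
  have hil := i.isLt
  set j1 : Fin ℓ := ⟨(j : ℕ) - 1, by omega⟩ with hj1
  have hj1j : j1 ≠ j := by
    intro h
    have := congrArg Fin.val h
    simp only [hj1] at this
    omega
  have hji : i ≠ j := by
    intro h; rw [h] at hij; omega
  -- the map lands in the event
  have hmaps : ∀ ω : (Fin ℓ → Fin 2) × (Fin ℓ → Fin 2), ω ∈ Finset.univ →
      Phi ℓ hℓ i j hij ω ∈ (Finset.univ.filter (fun ω : (Fin ℓ → Fin 2) × (Fin ℓ → Fin 2) =>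
        pSeq (fun n => ω.1 ⟨n % ℓ, Nat.mod_lt n hℓ⟩) (i : ℕ) =
          pSeq (fun n => ω.1 ⟨n % ℓ, Nat.mod_lt n hℓ⟩) (j : ℕ) ∧
        ω.2 i ≠ ω.2 j)) := by
    intro ω _
    rw [Finset.mem_filter]
    refine ⟨Finset.mem_univ _, ?_, ?_⟩
    · -- p part
      set c : ℕ → Fin 2 := cFun ℓ hℓ ω.1 with hc
      set b := pick (pSeq c ((j : ℕ) - 2)) (pSeq c (i : ℕ)) with hb
      have hc' : (fun n => (Phi ℓ hℓ i j hij ω).1 ⟨n % ℓ, Nat.mod_lt n hℓ⟩)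
          = cFun ℓ hℓ (Phi ℓ hℓ i j hij ω).1 := rfl
      set c' : ℕ → Fin 2 := cFun ℓ hℓ (Phi ℓ hℓ i j hij ω).1 with hcc'
      show pSeq c' (i : ℕ) = pSeq c' (j : ℕ)
      have hsmall : ∀ m, 1 ≤ m → m ≤ (j : ℕ) - 2 → c' m = c m := by
        intro m h1 h2
        have hm : m % ℓ = m := Nat.mod_eq_of_lt (by omega)
        have hne1 : (⟨m % ℓ, Nat.mod_lt m hℓ⟩ : Fin ℓ) ≠ j1 := by
          intro h; have := congrArg Fin.val h; simp only [hj1] at this; omega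
        have hne2 : (⟨m % ℓ, Nat.mod_lt m hℓ⟩ : Fin ℓ) ≠ j := by
          intro h; have := congrArg Fin.val h; simp only at this; omega
        simp only [hcc', cFun, Phi, hc]
        rw [Function.update_of_ne hne2, Function.update_of_ne hne1]
      have hc'i : pSeq c' (i : ℕ) = pSeq c (i : ℕ) :=
        pSeq_congr _ (fun m h1 h2 => hsmall m h1 (by omega))
      have hc'j2 : pSeq c' ((j : ℕ) - 2) = pSeq c ((j : ℕ) - 2) :=
        pSeq_congr _ (fun m h1 h2 => hsmall m h1 h2)
      have hcj1 : c' ((j : ℕ) - 1) = b.1 := by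
        have hm : ((j : ℕ) - 1) % ℓ = (j : ℕ) - 1 := Nat.mod_eq_of_lt (by omega)
        have heq : (⟨((j : ℕ) - 1) % ℓ, Nat.mod_lt _ hℓ⟩ : Fin ℓ) = j1 := by
          simp only [hj1]; exact Fin.ext hm
        simp only [hcc', cFun, Phi]
        rw [heq, Function.update_of_ne hj1j, Function.update_self]
      have hcj : c' (j : ℕ) = b.2 := by
        have hm : (j : ℕ) % ℓ = (j : ℕ) := Nat.mod_eq_of_lt (by omega)
        have heq : (⟨(j : ℕ) % ℓ, Nat.mod_lt _ hℓ⟩ : Fin ℓ) = j := Fin.ext hm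
        simp only [hcc', cFun, Phi]
        rw [heq, Function.update_self]
      have hstep : pSeq c' ((j : ℕ)) =
          nextP (nextP (pSeq c' ((j : ℕ) - 2)) (c' ((j : ℕ) - 1))) (c' (j : ℕ)) := by
        conv_lhs => rw [show (j : ℕ) = ((j : ℕ) - 2) + 1 + 1 from by omega]
        simp only [pSeq]
        rw [show (j : ℕ) - 2 + 1 = (j : ℕ) - 1 from by omega,
          show (j : ℕ) - 1 + 1 = (j : ℕ) from by omega]
      rw [hstep, hcj1, hcj, hc'j2, hc'i, hb, pick_spec]
    · -- q part
      show Function.update ω.2 j (ω.2 i + 1) i ≠ Function.update ω.2 j (ω.2 i + 1) j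
      rw [Function.update_of_ne hji, Function.update_self]
      have : ∀ x : Fin 2, x ≠ x + 1 := by decide
      exact this _
  rw [← Finset.card_univ]
  refine Finset.card_le_mul_card_image_of_maps_to hmaps 8 ?_
  intro b _
  -- fibers of Phi have size at most 8
  have : ((Finset.univ : Finset ((Fin ℓ → Fin 2) × (Fin ℓ → Fin 2))).filter
      (fun a => Phi ℓ hℓ i j hij a = b)).card ≤
      (Finset.univ : Finset (Fin 2 × Fin 2 × Fin 2)).card := by
    apply Finset.card_le_card_of_injOn (fun ω => (ω.1 j1, ω.1 j, ω.2 j))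
    · intro _ _; exact Finset.mem_univ _
    · intro ω hω ω' hω' hg
      simp only [Finset.coe_filter, Set.mem_setOf_eq] at hω hω'
      have hΦ : Phi ℓ hℓ i j hij ω = Phi ℓ hℓ i j hij ω' := by rw [hω.2, hω'.2]
      have h1 := congrArg Prod.fst hΦ
      have h2 := congrArg Prod.snd hΦ
      simp only [Phi] at h1 h2
      have hg1 : ω.1 j1 = ω'.1 j1 := congrArg (fun p => p.1) hg
      have hg2 : ω.1 j = ω'.1 j := congrArg (fun p => p.2.1) hg
      have hg3 : ω.2 j = ω'.2 j := congrArg (fun p => p.2.2) hg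
      have e1 : ω.1 = ω'.1 := by
        funext k
        by_cases hk2 : k = j
        · rw [hk2]; exact hg2
        by_cases hk1 : k = j1
        · rw [hk1]; exact hg1
        · have := congrFun h1 k
          rwa [Function.update_of_ne hk2, Function.update_of_ne hk1,
            Function.update_of_ne hk2, Function.update_of_ne hk1] at this
      have e2 : ω.2 = ω'.2 := by
        funext k
        by_cases hk2 : k = j
        · rw [hk2]; exact hg3
        · have := congrFun h2 k
          rwa [Function.update_of_ne hk2, Function.update_of_ne hk2] at this
      exact Prod.ext e1 e2
  simpa using this

/-- In the random assignment process (`p₁` fixed, `p_i` uniform over the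
two values different from `p_{i−1}`, and each `q_j` uniform over `{1,2}` independently),
for every pair of indices with `|i − j| ≥ 2` the probability that `p_i = p_j` and
`q_i ≠ q_j` is at least `1/8`; equivalently, with the uniform counting measure on the
space of coin flips, at least a `1/8` fraction of outcomes satisfies the event. -/
theorem random_assignment_matches (ℓ : ℕ) (hℓ : 0 < ℓ) (i j : Fin ℓ)
    (hij : (i : ℕ) + 2 ≤ (j : ℕ) ∨ (j : ℕ) + 2 ≤ (i : ℕ)) :
    Fintype.card ((Fin ℓ → Fin 2) × (Fin ℓ → Fin 2)) ≤
      8 * (Finset.univ.filter (fun ω : (Fin ℓ → Fin 2) × (Fin ℓ → Fin 2) =>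
        pSeq (fun n => ω.1 ⟨n % ℓ, Nat.mod_lt n hℓ⟩) (i : ℕ) =
          pSeq (fun n => ω.1 ⟨n % ℓ, Nat.mod_lt n hℓ⟩) (j : ℕ) ∧
        ω.2 i ≠ ω.2 j)).card := by
  rcases hij with h | h
  · exact aux_main ℓ hℓ i j h
  · have := aux_main ℓ hℓ j i h
    refine this.trans (Nat.mul_le_mul_left 8 (Finset.card_le_card ?_))
    intro ω hω
    simp only [Finset.mem_filter] at hω ⊢
    exact ⟨hω.1, hω.2.1.symm, hω.2.2.symm⟩
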